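/- Let V^• be a Z-graded vector space with two anticommuting square-zero endomorphisms δ₁, δ₂ of coprime degrees |δ₁|, |δ₂|, with finite-dimensional δ₁- and δ₂-cohomology in each degree. Then for every j: dim H^j_{BC}(V) + dim H^j_A(V) ≥ dim H^j_{δ₁}(V) + dim H^j_{δ₂}(V). -/

import Mathlib

open LinearMap

/-- The (cardinal) dimension of the quotient `A / (A ∩ B)` of submodules. -/
noncomputable def qrank {K V : Type*} [Field K] [AddCommGroup V] [Module K V]
    (A B : Submodule K V) : Cardinal :=
  Module.rank K (↥A ⧸ B.comap A.subtype)

/- STATEMENT 10: Frölicher-type inequality for a ℤ-graded vector space with two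
anticommuting square-zero homogeneous endomorphisms δ₁, δ₂ of coprime degrees and
finite dimensional δᵢ-cohomology in each degree:
dim H^j_BC + dim H^j_A ≥ dim H^j_{δ₁} + dim H^j_{δ₂} for every j. -/
theorem frolicher_type_inequality_graded
    {K V : Type*} [Field K] [AddCommGroup V] [Module K V]
    (𝒱 : ℤ → Submodule K V) (hinternal : DirectSum.IsInternal 𝒱)
    (a b : ℤ) (hcoprime : Int.gcd a b = 1)
    (δ₁ δ₂ : V →ₗ[K] V)
    (hδ₁deg : ∀ p : ℤ, ∀ x ∈ 𝒱 p, δ₁ x ∈ 𝒱 (p + a))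
    (hδ₂deg : ∀ p : ℤ, ∀ x ∈ 𝒱 p, δ₂ x ∈ 𝒱 (p + b))
    (h1 : δ₁ ∘ₗ δ₁ = 0) (h2 : δ₂ ∘ₗ δ₂ = 0) (h12 : δ₁ ∘ₗ δ₂ + δ₂ ∘ₗ δ₁ = 0)
    (hfin : ∀ j : ℤ,
      qrank (ker δ₁ ⊓ 𝒱 j) (range δ₁) < Cardinal.aleph0 ∧
      qrank (ker δ₂ ⊓ 𝒱 j) (range δ₂) < Cardinal.aleph0) :
    ∀ j : ℤ,
      qrank (ker δ₁ ⊓ 𝒱 j) (range δ₁) + qrank (ker δ₂ ⊓ 𝒱 j) (range δ₂) ≤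
        qrank (ker δ₁ ⊓ ker δ₂ ⊓ 𝒱 j) (range (δ₁ ∘ₗ δ₂)) +
          qrank (ker (δ₁ ∘ₗ δ₂) ⊓ 𝒱 j) (range δ₁ ⊔ range δ₂) := by
  classical
  intro j
  -- pointwise versions of the relations
  have hh1 : ∀ x, δ₁ (δ₁ x) = 0 := fun x => by
    have := LinearMap.ext_iff.1 h1 x; simpa using this
  have hh2 : ∀ x, δ₂ (δ₂ x) = 0 := fun x => by
    have := LinearMap.ext_iff.1 h2 x; simpa using this
  have hh12 : ∀ x, δ₁ (δ₂ x) + δ₂ (δ₁ x) = 0 := fun x => by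
    have := LinearMap.ext_iff.1 h12 x; simpa using this
  -- graded projections
  let π : ℤ → (V →ₗ[K] V) := fun i =>
    (𝒱 i).subtype ∘ₗ (DirectSum.component K ℤ (fun i => ↥(𝒱 i)) i) ∘ₗ
      (LinearEquiv.ofBijective (DirectSum.coeLinearMap 𝒱) hinternal).symm.toLinearMap
  have hπapp : ∀ (i : ℤ) (x : V), π i x =
      (((LinearEquiv.ofBijective (DirectSum.coeLinearMap 𝒱) hinternal).symm x) i : V) :=
    fun i x => rfl
  have hmemπ : ∀ (i : ℤ) (x : V), π i x ∈ 𝒱 i := fun i x => by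
    rw [hπapp]; exact Submodule.coe_mem _
  have hpiece : ∀ (p i : ℤ) (x : V), x ∈ 𝒱 p → π i x = if p = i then x else 0 := by
    intro p i x hx
    by_cases h : p = i
    · subst h
      rw [hπapp, hinternal.ofBijective_coeLinearMap_of_mem hx, if_pos rfl]
    · rw [hπapp, hinternal.ofBijective_coeLinearMap_of_mem_ne h hx, if_neg h]
      rfl
  have hcomm : ∀ (δ : V →ₗ[K] V) (c : ℤ),
      (∀ p : ℤ, ∀ x ∈ 𝒱 p, δ x ∈ 𝒱 (p + c)) →
      ∀ (i : ℤ) (x : V), π i (δ x) = δ (π (i - c) x) := by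
    intro δ c hδ i x
    have hx : x ∈ ⨆ p, 𝒱 p := by
      rw [hinternal.submodule_iSup_eq_top]; trivial
    refine Submodule.iSup_induction (motive := fun x => π i (δ x) = δ (π (i - c) x)) 𝒱 hx
      ?_ ?_ ?_
    · intro p y hy
      rw [hpiece (p + c) i (δ y) (hδ p y hy), hpiece p (i - c) y hy]
      by_cases h : p + c = i
      · rw [if_pos h, if_pos (by omega)]
      · rw [if_neg h, if_neg (by omega), map_zero]
    · simp
    · intro y z hy hz
      rw [map_add, map_add, hy, hz, map_add, map_add]
  -- refinement of decompositions in the sum of the ranges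
  have hrefine : ∀ w : V, w ∈ 𝒱 j → w ∈ range δ₁ ⊔ range δ₂ →
      ∃ u v : V, u ∈ 𝒱 (j - a) ∧ v ∈ 𝒱 (j - b) ∧ δ₁ u + δ₂ v = w := by
    intro w hw hsup
    rcases Submodule.mem_sup.1 hsup with ⟨w₁, hw₁, w₂, hw₂, rfl⟩
    rcases hw₁ with ⟨s, rfl⟩
    rcases hw₂ with ⟨t, rfl⟩
    refine ⟨π (j - a) s, π (j - b) t, hmemπ _ _, hmemπ _ _, ?_⟩
    have hid : π j (δ₁ s + δ₂ t) = δ₁ s + δ₂ t := by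
      rw [hpiece j j _ hw, if_pos rfl]
    rw [← hid, map_add, hcomm δ₁ a hδ₁deg j s, hcomm δ₂ b hδ₂deg j t]
  -- the relevant submodules
  set N₁ : Submodule K V := ker δ₁ ⊓ 𝒱 j with hN₁def
  set N₂ : Submodule K V := ker δ₂ ⊓ 𝒱 j with hN₂def
  set NB : Submodule K V := ker δ₁ ⊓ ker δ₂ ⊓ 𝒱 j with hNBdef
  set NA : Submodule K V := ker (δ₁ ∘ₗ δ₂) ⊓ 𝒱 j with hNAdef
  have hN₁A : N₁ ≤ NA := by
    intro x hx
    obtain ⟨hx1, hxj⟩ := Submodule.mem_inf.1 hx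
    refine Submodule.mem_inf.2 ⟨?_, hxj⟩
    have hx1' : δ₁ x = 0 := mem_ker.1 hx1
    have := hh12 x
    rw [hx1', map_zero, add_zero] at this
    exact mem_ker.2 (by simpa using this)
  have hN₂A : N₂ ≤ NA := by
    intro x hx
    obtain ⟨hx2, hxj⟩ := Submodule.mem_inf.1 hx
    refine Submodule.mem_inf.2 ⟨?_, hxj⟩
    have hx2' : δ₂ x = 0 := mem_ker.1 hx2
    exact mem_ker.2 (by simp [LinearMap.comp_apply, hx2'])
  have hB1 : NB ≤ N₁ := inf_le_inf_right _ inf_le_left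
  have hB2 : NB ≤ N₂ := inf_le_inf_right _ inf_le_right
  -- the four cohomology groups as quotients
  set D₁ : Submodule K N₁ := (range δ₁).comap N₁.subtype with hD₁def
  set D₂ : Submodule K N₂ := (range δ₂).comap N₂.subtype with hD₂def
  set DB : Submodule K NB := (range (δ₁ ∘ₗ δ₂)).comap NB.subtype with hDBdef
  set DA : Submodule K NA := (range δ₁ ⊔ range δ₂).comap NA.subtype with hDAdef
  -- maps from H₁, H₂ to H_A
  have hf₁cond : D₁ ≤ DA.comap (Submodule.inclusion hN₁A) := by
    intro x hx
    simp only [hD₁def, Submodule.mem_comap, Submodule.subtype_apply] at hx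
    simp only [hDAdef, Submodule.mem_comap, Submodule.subtype_apply,
      Submodule.coe_inclusion]
    exact Submodule.mem_sup_left hx
  have hf₂cond : D₂ ≤ DA.comap (Submodule.inclusion hN₂A) := by
    intro x hx
    simp only [hD₂def, Submodule.mem_comap, Submodule.subtype_apply] at hx
    simp only [hDAdef, Submodule.mem_comap, Submodule.subtype_apply,
      Submodule.coe_inclusion]
    exact Submodule.mem_sup_right hx
  let f₁ : (N₁ ⧸ D₁) →ₗ[K] (NA ⧸ DA) :=
    Submodule.mapQ D₁ DA (Submodule.inclusion hN₁A) hf₁cond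
  let f₂ : (N₂ ⧸ D₂) →ₗ[K] (NA ⧸ DA) :=
    Submodule.mapQ D₂ DA (Submodule.inclusion hN₂A) hf₂cond
  -- maps from H_BC to H₁ and H₂
  have hg₁cond : DB ≤ D₁.comap (Submodule.inclusion hB1) := by
    intro x hx
    simp only [hDBdef, Submodule.mem_comap, Submodule.subtype_apply] at hx
    rcases hx with ⟨v, hv⟩
    simp only [hD₁def, Submodule.mem_comap, Submodule.subtype_apply,
      Submodule.coe_inclusion]
    exact ⟨δ₂ v, hv⟩
  have hg₂cond : DB ≤ D₂.comap (Submodule.inclusion hB2) := by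
    intro x hx
    simp only [hDBdef, Submodule.mem_comap, Submodule.subtype_apply] at hx
    rcases hx with ⟨v, hv⟩
    simp only [hD₂def, Submodule.mem_comap, Submodule.subtype_apply,
      Submodule.coe_inclusion]
    refine ⟨-(δ₁ v), ?_⟩
    rw [LinearMap.comp_apply] at hv
    rw [map_neg, eq_neg_of_add_eq_zero_right (hh12 v), neg_neg]
    exact hv
  let g₁ : (NB ⧸ DB) →ₗ[K] (N₁ ⧸ D₁) :=
    Submodule.mapQ DB D₁ (Submodule.inclusion hB1) hg₁cond
  let g₂ : (NB ⧸ DB) →ₗ[K] (N₂ ⧸ D₂) :=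
    Submodule.mapQ DB D₂ (Submodule.inclusion hB2) hg₂cond
  let φ : (NB ⧸ DB) →ₗ[K] ((N₁ ⧸ D₁) × (N₂ ⧸ D₂)) := g₁.prod g₂
  let ψ : ((N₁ ⧸ D₁) × (N₂ ⧸ D₂)) →ₗ[K] (NA ⧸ DA) :=
    f₁ ∘ₗ LinearMap.fst K _ _ - f₂ ∘ₗ LinearMap.snd K _ _
  -- the key inclusion : ker ψ ≤ range φ
  have hker : ker ψ ≤ range φ := by
    rintro ⟨c₁, c₂⟩ hc
    obtain ⟨x, rfl⟩ := Submodule.Quotient.mk_surjective _ c₁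
    obtain ⟨y, rfl⟩ := Submodule.Quotient.mk_surjective _ c₂
    have hc' : f₁ (Submodule.Quotient.mk x) = f₂ (Submodule.Quotient.mk y) := by
      have h0 := mem_ker.1 hc
      simp only [ψ, LinearMap.sub_apply, LinearMap.comp_apply, LinearMap.fst_apply,
        LinearMap.snd_apply, sub_eq_zero] at h0
      exact h0
    rw [Submodule.mapQ_apply, Submodule.mapQ_apply, Submodule.Quotient.eq] at hc'
    have hd : ((x : V) - (y : V)) ∈ range δ₁ ⊔ range δ₂ := by
      simpa [hDAdef, Submodule.mem_comap, Submodule.subtype_apply] using hc'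
    have hxj : (x : V) ∈ 𝒱 j := (Submodule.mem_inf.1 x.2).2
    have hyj : (y : V) ∈ 𝒱 j := (Submodule.mem_inf.1 y.2).2
    obtain ⟨u, v, hu, hv, huv⟩ := hrefine _ (Submodule.sub_mem _ hxj hyj) hd
    set z : V := (x : V) - δ₁ u with hzdef
    have hz2 : z = (y : V) + δ₂ v := by
      have hδu : δ₁ u = (x : V) - (y : V) - δ₂ v := by rw [← huv]; abel
      rw [hzdef, hδu]; abel
    have hz1ker : δ₁ z = 0 := by
      have hx1 : δ₁ (x : V) = 0 := mem_ker.1 (Submodule.mem_inf.1 x.2).1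
      rw [hzdef, map_sub, hx1, hh1 u, sub_zero]
    have hz2ker : δ₂ z = 0 := by
      have hy2 : δ₂ (y : V) = 0 := mem_ker.1 (Submodule.mem_inf.1 y.2).1
      rw [hz2, map_add, hy2, hh2 v, add_zero]
    have hzj : z ∈ 𝒱 j := by
      have hδ₁u : δ₁ u ∈ 𝒱 j := by
        have := hδ₁deg (j - a) u hu
        rwa [sub_add_cancel] at this
      exact Submodule.sub_mem _ hxj hδ₁u
    have hzNB : z ∈ NB := Submodule.mem_inf.2 ⟨Submodule.mem_inf.2 ⟨mem_ker.2 hz1ker, mem_ker.2 hz2ker⟩, hzj⟩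
    refine ⟨Submodule.Quotient.mk ⟨z, hzNB⟩, ?_⟩
    have e₁ : g₁ (Submodule.Quotient.mk ⟨z, hzNB⟩) = Submodule.Quotient.mk x := by
      rw [Submodule.mapQ_apply, Submodule.Quotient.eq]
      simp only [hD₁def, Submodule.mem_comap, Submodule.subtype_apply]
      refine ⟨-u, ?_⟩
      push_cast
      rw [map_neg]
      simp only [Submodule.coe_inclusion]
      rw [hzdef]; abel
    have e₂ : g₂ (Submodule.Quotient.mk ⟨z, hzNB⟩) = Submodule.Quotient.mk y := by
      rw [Submodule.mapQ_apply, Submodule.Quotient.eq]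
      simp only [hD₂def, Submodule.mem_comap, Submodule.subtype_apply]
      refine ⟨v, ?_⟩
      push_cast
      simp only [Submodule.coe_inclusion]
      rw [hz2]; abel
    simp only [φ, LinearMap.prod_apply, Pi.prod]
    exact Prod.ext e₁ e₂
  -- conclude with rank computations
  unfold qrank
  calc
    Module.rank K (N₁ ⧸ D₁) + Module.rank K (N₂ ⧸ D₂)
        ≤ Module.rank K ((N₁ ⧸ D₁) × (N₂ ⧸ D₂)) := rank_add_rank_le_rank_prod K _
    _ = Module.rank K (range ψ) + Module.rank K (ker ψ) :=
        (ψ.rank_range_add_rank_ker).symm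
    _ ≤ Module.rank K (NA ⧸ DA) + Module.rank K (NB ⧸ DB) := by
        refine add_le_add (Submodule.rank_le _) ?_
        exact le_trans (Submodule.rank_mono hker) (rank_range_le φ)
    _ = Module.rank K (NB ⧸ DB) + Module.rank K (NA ⧸ DA) := add_comm _ _
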